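/- Let Φ and h be as in the canonical construction with d = 1 + rλ + sλ′, let Υ be a clause minimum prime pure Horn CNF representation of h, and define the labelings f_j from Υ as in the construction. Then for every index j ∈ [t] and every vertex y ∈ Y it holds that |f_j(y)| ≥ 1; combined with the upper bound for prime irredundant representations, |f_j(y)| = 1 for all j ∈ [t] and y ∈ Y. -/

import Mathlib

open Finset

/-- A clause, given by its (fin)sets of positive and negative variables. -/
structure Clause (V : Type*) where
  pos : Finset V
  neg : Finset V
deriving DecidableEq

namespace Clause

variable {V : Type*}

/-- A genuine clause: no variable occurs both positively and negatively. -/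
def IsClause (C : Clause V) : Prop := Disjoint C.pos C.neg

/-- Evaluation of a clause (as a disjunction of literals) under an assignment. -/
def eval (C : Clause V) (a : V → Bool) : Prop :=
  (∃ v ∈ C.pos, a v = true) ∨ (∃ v ∈ C.neg, a v = false)

/-- A pure (definite) Horn clause: exactly one positive literal, its head. -/
def IsPureHorn (C : Clause V) : Prop := ∃ v, C.pos = {v}

end Clause

variable {V : Type*}

/-- Conjunction (as a predicate on assignments) of a set of clauses. -/
def evalSet (S : Set (Clause V)) (a : V → Bool) : Prop := ∀ C ∈ S, C.eval a

/-- Conjunction of the clauses of a CNF, i.e. of a finite set of clauses. -/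
def evalCNF (Φ : Finset (Clause V)) (a : V → Bool) : Prop := ∀ C ∈ Φ, C.eval a

/-- A CNF represents a Boolean function `h`. -/
def Represents (Φ : Finset (Clause V)) (h : (V → Bool) → Prop) : Prop :=
  ∀ a, evalCNF Φ a ↔ h a

/-- A pure Horn CNF: all clauses are pure Horn. -/
def IsPureHornCNF (Φ : Finset (Clause V)) : Prop :=
  ∀ C ∈ Φ, C.IsClause ∧ C.IsPureHorn

/-- The forward chaining closure of a set `Q` of variables with respect to the
pure Horn CNF `Φ`: the smallest set containing `Q` such that whenever `Φ` contains
a clause `S → v` with `S` inside the set, also `v` belongs to it. -/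
def fcClosure (Φ : Finset (Clause V)) (Q : Set V) : Set V :=
  ⋂₀ {T : Set V | Q ⊆ T ∧ ∀ C ∈ Φ, ∀ v : V, C.pos = {v} → ↑C.neg ⊆ T → v ∈ T}

/-- `C` is an implicate of `h`: every assignment falsifying `C` falsifies `h`. -/
def Implicate (h : (V → Bool) → Prop) (C : Clause V) : Prop :=
  ∀ a, ¬ C.eval a → ¬ h a

/-- `C` is a prime implicate of `h`: an implicate from which no literal can be
deleted while remaining an implicate. -/
def PrimeImplicate [DecidableEq V] (h : (V → Bool) → Prop) (C : Clause V) : Prop :=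
  C.IsClause ∧ Implicate h C ∧
  (∀ v ∈ C.pos, ¬ Implicate h ⟨C.pos.erase v, C.neg⟩) ∧
  (∀ v ∈ C.neg, ¬ Implicate h ⟨C.pos, C.neg.erase v⟩)

/-- `C₁` and `C₂` are resolvable on `v`: `v` occurs positively in `C₁`, negatively in
`C₂`, and no other variable occurs with opposite signs in them. -/
def Resolvable (C₁ C₂ : Clause V) (v : V) : Prop :=
  v ∈ C₁.pos ∧ v ∈ C₂.neg ∧
  ∀ w, w ≠ v → ¬(w ∈ C₁.pos ∧ w ∈ C₂.neg) ∧ ¬(w ∈ C₁.neg ∧ w ∈ C₂.pos)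

/-- The resolvent `R(C₁,C₂) = (C₁ \ {v}) ∪ (C₂ \ {v̄})`. -/
def resolventOf [DecidableEq V] (C₁ C₂ : Clause V) (v : V) : Clause V :=
  ⟨C₁.pos.erase v ∪ C₂.pos, C₁.neg ∪ C₂.neg.erase v⟩

/-- A set of clauses closed under resolution. -/
def ResClosed [DecidableEq V] (S : Set (Clause V)) : Prop :=
  ∀ C₁ ∈ S, ∀ C₂ ∈ S, ∀ v, Resolvable C₁ C₂ v → resolventOf C₁ C₂ v ∈ S

/-- The resolution closure of a set of clauses. -/
def resClosure [DecidableEq V] (S : Set (Clause V)) : Set (Clause V) :=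
  ⋂₀ {T : Set (Clause V) | S ⊆ T ∧ ResClosed T}

/-- `I(h)`: the resolution closure of the set of prime implicates of `h`. -/
def implSet [DecidableEq V] (h : (V → Bool) → Prop) : Set (Clause V) :=
  resClosure {C | PrimeImplicate h C}

/-- An exclusive set of clauses of `h`. -/
def ExclusiveSet [DecidableEq V] (h : (V → Bool) → Prop) (Xs : Set (Clause V)) : Prop :=
  Xs ⊆ implSet h ∧
  ∀ C₁ ∈ implSet h, ∀ C₂ ∈ implSet h, ∀ v, Resolvable C₁ C₂ v →
    resolventOf C₁ C₂ v ∈ Xs → C₁ ∈ Xs ∧ C₂ ∈ Xs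

/-- The set of variables occurring in a CNF. -/
def varsOf [DecidableEq V] (Φ : Finset (Clause V)) : Finset V :=
  Φ.biUnion fun C => C.pos ∪ C.neg


/-- A Label Cover instance: a bipartite graph with parts `X` and `Y` and edge set `E`,
label sets `A` (for `X`-vertices) and `B` (for `Y`-vertices), and a nonempty
constraint relation `cst e ⊆ A × B` for every edge `e ∈ E`. -/
structure LabelCover (X Y A B : Type*) where
  E : Finset (X × Y)
  cst : X × Y → Finset (A × B)
  cst_nonempty : ∀ e ∈ E, (cst e).Nonempty

namespace LabelCover

variable {X Y A B : Type*}

/-- A labeling `(f, g)` covers an edge `(x,y)` if for every label `b ∈ g y` there is a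
label `a ∈ f x` with `(a, b)` admissible for the edge. -/
def Covers (I : LabelCover X Y A B) (f : X → Finset A) (g : Y → Finset B)
    (e : X × Y) : Prop :=
  ∀ b ∈ g e.2, ∃ a ∈ f e.1, (a, b) ∈ I.cst e

/-- A total-cover: a labeling (assigning a nonempty label set to every `Y`-vertex)
covering every edge. -/
def IsTotalCover (I : LabelCover X Y A B) (f : X → Finset A) (g : Y → Finset B) : Prop :=
  (∀ y, (g y).Nonempty) ∧ ∀ e ∈ I.E, I.Covers f g e

/-- A total-cover is tight if every `Y`-vertex receives exactly one label. -/
def Tight (g : Y → Finset B) : Prop := ∀ y, (g y).card = 1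

end LabelCover

/-- The cost of a labeling: the average number of labels assigned to `X`-vertices. -/
def lcCost {X A : Type*} [Fintype X] (f : X → Finset A) : ℚ :=
  (∑ x, ((f x).card : ℚ)) / (Fintype.card X : ℚ)


/-- The labels of the refined Label Cover instance: `L ∪ L′`, where `L = ⋃_x L_x`
with `L_x = {x} × A` and `L′ = ⋃_y L′_y` with `L′_y = {y} × B`. -/
abbrev Lab (X Y A B : Type*) := (X × A) ⊕ (Y × B)

/-- The propositional variables of the canonical pure Horn CNF construction:
`u ℓ` for labels `ℓ ∈ L ∪ L′`, `e x y i` and `el x y ℓ′ i` for edges `(x,y)`,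
labels `ℓ′ ∈ L′_y` and indices `i ∈ [d]`, and `v j` for `j ∈ [t]`. -/
inductive PV (X Y A B : Type*) where
  | u : Lab X Y A B → PV X Y A B
  | e : X → Y → ℕ → PV X Y A B
  | el : X → Y → B → ℕ → PV X Y A B
  | v : ℕ → PV X Y A B
deriving DecidableEq

section Canonical

variable {X Y A B : Type*} [Fintype X] [Fintype Y] [Fintype A] [Fintype B]
  [DecidableEq X] [DecidableEq Y] [DecidableEq A] [DecidableEq B]

/-- The (open) neighborhood `N(y) = {z ∈ X : (z,y) ∈ E}`. -/
def Nbr (I : LabelCover X Y A B) (y : Y) : Finset X :=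
  Finset.univ.filter fun z => (z, y) ∈ I.E

/-- Clauses (a): `u(ℓ) ∧ u(ℓ′) → e(x,y,ℓ′,i)` for `(x,y) ∈ E`, `(ℓ,ℓ′) ∈ Π_{(x,y)}`,
`i ∈ [d]`. -/
def clA (I : LabelCover X Y A B) (d : ℕ) : Finset (Clause (PV X Y A B)) :=
  (I.E ×ˢ Finset.Icc 1 d).biUnion fun p =>
    (I.cst p.1).image fun ab =>
      ⟨{PV.el p.1.1 p.1.2 ab.2 p.2},
       {PV.u (Sum.inl (p.1.1, ab.1)), PV.u (Sum.inr (p.1.2, ab.2))}⟩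

/-- Clauses (b): `⋀_{z ∈ N(y)} e(z,y,ℓ′,i) → e(x,y,i)` for `(x,y) ∈ E`, `ℓ′ ∈ L′_y`,
`i ∈ [d]`. -/
def clB (I : LabelCover X Y A B) (d : ℕ) : Finset (Clause (PV X Y A B)) :=
  ((I.E ×ˢ (Finset.univ : Finset B)) ×ˢ Finset.Icc 1 d).image fun p =>
    ⟨{PV.e p.1.1.1 p.1.1.2 p.2},
     (Nbr I p.1.1.2).image fun z => PV.el z p.1.1.2 p.1.2 p.2⟩

/-- Clauses (c): `e(x,y,i) → e(x,y,ℓ′,i)` for `(x,y) ∈ E`, `ℓ′ ∈ L′_y`, `i ∈ [d]`. -/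
def clC (I : LabelCover X Y A B) (d : ℕ) : Finset (Clause (PV X Y A B)) :=
  ((I.E ×ˢ (Finset.univ : Finset B)) ×ˢ Finset.Icc 1 d).image fun p =>
    ⟨{PV.el p.1.1.1 p.1.1.2 p.1.2 p.2}, {PV.e p.1.1.1 p.1.1.2 p.2}⟩

/-- The common body of the clauses (d): all variables `e(x,y,i)`, `(x,y) ∈ E`, `i ∈ [d]`. -/
def bigBody (I : LabelCover X Y A B) (d : ℕ) : Finset (PV X Y A B) :=
  (I.E ×ˢ Finset.Icc 1 d).image fun p => PV.e p.1.1 p.1.2 p.2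

/-- Clauses (d): `⋀_{i ∈ [d]} ⋀_{(x,y) ∈ E} e(x,y,i) → u(ℓ)` for `ℓ ∈ L ∪ L′`. -/
def clD (I : LabelCover X Y A B) (d : ℕ) : Finset (Clause (PV X Y A B)) :=
  (Finset.univ : Finset (Lab X Y A B)).image fun ℓ => ⟨{PV.u ℓ}, bigBody I d⟩

/-- Clauses (e): `v(j) → u(ℓ)` for `j ∈ [t]`, `ℓ ∈ L ∪ L′`. -/
def clE (X Y A B : Type*) [Fintype X] [Fintype Y] [Fintype A] [Fintype B]
    [DecidableEq X] [DecidableEq Y] [DecidableEq A] [DecidableEq B]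
    (t : ℕ) : Finset (Clause (PV X Y A B)) :=
  (Finset.Icc 1 t ×ˢ (Finset.univ : Finset (Lab X Y A B))).image fun p =>
    ⟨{PV.u p.2}, {PV.v p.1}⟩

/-- The canonical formula `Ψ`: clauses of types (a)–(d). -/
def PsiCNF (I : LabelCover X Y A B) (d : ℕ) : Finset (Clause (PV X Y A B)) :=
  clA I d ∪ clB I d ∪ clC I d ∪ clD I d

/-- The canonical formula `Φ`: clauses of types (a)–(e). -/
def PhiCNF (I : LabelCover X Y A B) (d t : ℕ) : Finset (Clause (PV X Y A B)) :=
  PsiCNF I d ∪ clE X Y A B t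

/-- The pure Horn function `h` represented by the canonical formula `Φ`. -/
def hFun (I : LabelCover X Y A B) (d t : ℕ) : (PV X Y A B → Bool) → Prop :=
  fun a => evalCNF (PhiCNF I d t) a

/-- The pure Horn function `g` represented by the canonical formula `Ψ`. -/
def gFun (I : LabelCover X Y A B) (d : ℕ) : (PV X Y A B → Bool) → Prop :=
  fun a => evalCNF (PsiCNF I d) a

end Canonical


/-- The `X`-side labeling extracted from a representation `Υ` of `h`:
`f_j(x) = S_j ∩ L_x`, where `S_j` is the set of labels `ℓ` such that the clause
`v(j) → u(ℓ)` belongs to `Υ`. -/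
def fjX {X Y A B : Type*} [Fintype X] [Fintype Y] [Fintype A] [Fintype B]
    [DecidableEq X] [DecidableEq Y] [DecidableEq A] [DecidableEq B]
    (Υ : Finset (Clause (PV X Y A B))) (j : ℕ) (x : X) : Finset A :=
  Finset.univ.filter fun a =>
    (⟨{PV.u (Sum.inl (x, a))}, {PV.v j}⟩ : Clause (PV X Y A B)) ∈ Υ

/-- The `Y`-side labeling extracted from a representation `Υ` of `h`:
`f_j(y) = S_j ∩ L′_y`, where `S_j` is the set of labels `ℓ` such that the clause
`v(j) → u(ℓ)` belongs to `Υ`. -/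
def fjY {X Y A B : Type*} [Fintype X] [Fintype Y] [Fintype A] [Fintype B]
    [DecidableEq X] [DecidableEq Y] [DecidableEq A] [DecidableEq B]
    (Υ : Finset (Clause (PV X Y A B))) (j : ℕ) (y : Y) : Finset B :=
  Finset.univ.filter fun b =>
    (⟨{PV.u (Sum.inr (y, b))}, {PV.v j}⟩ : Clause (PV X Y A B)) ∈ Υ



/-! ### Auxiliary machinery -/

section Infra
variable {V : Type*}

/-- Forward chaining derivability. -/
inductive Deriv (Γ : Finset (Clause V)) (Q : Set V) : V → Prop
  | base {w : V} : w ∈ Q → Deriv Γ Q w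
  | step {C : Clause V} {w : V} : C ∈ Γ → C.pos = {w} →
      (∀ u ∈ C.neg, Deriv Γ Q u) → Deriv Γ Q w

/-- Each clause has a singleton positive part. -/
def SingletonPos (Γ : Finset (Clause V)) : Prop := ∀ C ∈ Γ, ∃ w, C.pos = {w}

lemma deriv_monoQ {Γ : Finset (Clause V)} {Q Q' : Set V} (h : Q ⊆ Q') {w : V}
    (hw : Deriv Γ Q w) : Deriv Γ Q' w := by
  induction hw with
  | base hq => exact Deriv.base (h hq)
  | step hC hpos _ ih => exact Deriv.step hC hpos ih

lemma deriv_cut {Γ : Finset (Clause V)} {Q Q' : Set V} (h : ∀ q ∈ Q', Deriv Γ Q q) {w : V}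
    (hw : Deriv Γ Q' w) : Deriv Γ Q w := by
  induction hw with
  | base hq => exact h _ hq
  | step hC hpos _ ih => exact Deriv.step hC hpos ih

lemma deriv_monoG {Γ Γ' : Finset (Clause V)} (h : Γ ⊆ Γ') {Q : Set V} {w : V}
    (hw : Deriv Γ Q w) : Deriv Γ' Q w := by
  induction hw with
  | base hq => exact Deriv.base hq
  | step hC hpos _ ih => exact Deriv.step (h hC) hpos ih

lemma deriv_true {Γ : Finset (Clause V)} {Q : Set V} {a : V → Bool}
    (hsat : evalCNF Γ a) (hQ : ∀ q ∈ Q, a q = true) {w : V} (hw : Deriv Γ Q w) :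
    a w = true := by
  induction hw with
  | base hq => exact hQ _ hq
  | step hC hpos _ ih =>
    rcases hsat _ hC with ⟨v, hv, hav⟩ | ⟨v, hv, hav⟩
    · rw [hpos, Finset.mem_singleton] at hv; rwa [hv] at hav
    · rw [ih v hv] at hav; cases hav

lemma deriv_transfer {Γ₁ Γ₂ : Finset (Clause V)} {Q : Set V}
    (hsp : SingletonPos Γ₁) (hent : ∀ a, evalCNF Γ₁ a → evalCNF Γ₂ a)
    {w : V} (hw : Deriv Γ₂ Q w) : Deriv Γ₁ Q w := by
  classical
  set a : V → Bool := fun v => if Deriv Γ₁ Q v then true else false with ha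
  have key : ∀ v, a v = true ↔ Deriv Γ₁ Q v := by
    intro v
    by_cases h : Deriv Γ₁ Q v <;> simp [ha, h]
  have hsat : evalCNF Γ₁ a := by
    intro C hC
    obtain ⟨hd, hpos⟩ := hsp C hC
    by_cases hall : ∀ u ∈ C.neg, Deriv Γ₁ Q u
    · exact Or.inl ⟨hd, by rw [hpos]; exact Finset.mem_singleton_self hd,
        (key hd).2 (Deriv.step hC hpos hall)⟩
    · push_neg at hall
      obtain ⟨u, hu, hnd⟩ := hall
      refine Or.inr ⟨u, hu, ?_⟩
      by_cases h : a u = true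
      · exact absurd ((key u).1 h) hnd
      · simpa using h
  exact (key w).1 (deriv_true (hent a hsat) (fun q hq => (key q).2 (Deriv.base hq)) hw)

lemma Clause.eval_congr {C : Clause V} {a a' : V → Bool}
    (hp : ∀ z ∈ C.pos, a z = a' z) (hn : ∀ z ∈ C.neg, a z = a' z) :
    C.eval a ↔ C.eval a' := by
  unfold Clause.eval
  constructor <;> rintro (⟨v, hv, h⟩ | ⟨v, hv, h⟩)
  · exact Or.inl ⟨v, hv, (hp v hv) ▸ h⟩
  · exact Or.inr ⟨v, hv, (hn v hv) ▸ h⟩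
  · exact Or.inl ⟨v, hv, (hp v hv).symm ▸ h⟩
  · exact Or.inr ⟨v, hv, (hn v hv).symm ▸ h⟩

end Infra


section CanonicalFacts
set_option linter.unusedSectionVars false
set_option linter.unusedVariables false

variable {X Y A B : Type*} [Fintype X] [Fintype Y] [Fintype A] [Fintype B]
  [DecidableEq X] [DecidableEq Y] [DecidableEq A] [DecidableEq B]

/-- The variables actually constrained by the canonical construction. -/
def Active (I : LabelCover X Y A B) (d : ℕ) : PV X Y A B → Prop
  | PV.u _ => True
  | PV.e x y i => (x, y) ∈ I.E ∧ i ∈ Finset.Icc 1 d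
  | PV.el x y _ i => (x, y) ∈ I.E ∧ i ∈ Finset.Icc 1 d
  | PV.v _ => False

lemma Active.ne_v {I : LabelCover X Y A B} {d : ℕ} {w : PV X Y A B}
    (h : Active I d w) : ∀ p, w ≠ PV.v p := by
  cases w <;> simp [Active] at h ⊢

variable {I : LabelCover X Y A B} {d t : ℕ}

lemma mem_clA {C : Clause (PV X Y A B)} :
    C ∈ clA I d ↔ ∃ x y i aa b, (x, y) ∈ I.E ∧ i ∈ Finset.Icc 1 d ∧
      (aa, b) ∈ I.cst (x, y) ∧
      C = ⟨{PV.el x y b i}, {PV.u (Sum.inl (x, aa)), PV.u (Sum.inr (y, b))}⟩ := by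
  simp only [clA, Finset.mem_biUnion, Finset.mem_product, Finset.mem_image]
  constructor
  · rintro ⟨⟨⟨x, y⟩, i⟩, ⟨hE, hi⟩, ⟨aa, b⟩, hc, rfl⟩
    exact ⟨x, y, i, aa, b, hE, hi, hc, rfl⟩
  · rintro ⟨x, y, i, aa, b, hE, hi, hc, rfl⟩
    exact ⟨⟨⟨x, y⟩, i⟩, ⟨hE, hi⟩, ⟨aa, b⟩, hc, rfl⟩

lemma mem_clB {C : Clause (PV X Y A B)} :
    C ∈ clB I d ↔ ∃ x y i b, (x, y) ∈ I.E ∧ i ∈ Finset.Icc 1 d ∧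
      C = ⟨{PV.e x y i}, (Nbr I y).image fun z => PV.el z y b i⟩ := by
  simp only [clB, Finset.mem_image, Finset.mem_product, Finset.mem_univ, and_true]
  constructor
  · rintro ⟨⟨⟨⟨x, y⟩, b⟩, i⟩, ⟨hE, hi⟩, rfl⟩
    exact ⟨x, y, i, b, hE, hi, rfl⟩
  · rintro ⟨x, y, i, b, hE, hi, rfl⟩
    exact ⟨⟨⟨⟨x, y⟩, b⟩, i⟩, ⟨hE, hi⟩, rfl⟩

lemma mem_clC {C : Clause (PV X Y A B)} :
    C ∈ clC I d ↔ ∃ x y i b, (x, y) ∈ I.E ∧ i ∈ Finset.Icc 1 d ∧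
      C = ⟨{PV.el x y b i}, {PV.e x y i}⟩ := by
  simp only [clC, Finset.mem_image, Finset.mem_product, Finset.mem_univ, and_true]
  constructor
  · rintro ⟨⟨⟨⟨x, y⟩, b⟩, i⟩, ⟨hE, hi⟩, rfl⟩
    exact ⟨x, y, i, b, hE, hi, rfl⟩
  · rintro ⟨x, y, i, b, hE, hi, rfl⟩
    exact ⟨⟨⟨⟨x, y⟩, b⟩, i⟩, ⟨hE, hi⟩, rfl⟩

lemma mem_clD {C : Clause (PV X Y A B)} :
    C ∈ clD I d ↔ ∃ ℓ, C = ⟨{PV.u ℓ}, bigBody I d⟩ := by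
  simp only [clD, Finset.mem_image, Finset.mem_univ, true_and]
  tauto

lemma mem_clE {C : Clause (PV X Y A B)} :
    C ∈ clE X Y A B t ↔ ∃ j ℓ, j ∈ Finset.Icc 1 t ∧ C = ⟨{PV.u ℓ}, {PV.v j}⟩ := by
  simp only [clE, Finset.mem_image, Finset.mem_product, Finset.mem_univ, and_true]
  constructor
  · rintro ⟨⟨j, ℓ⟩, hj, rfl⟩
    exact ⟨j, ℓ, hj, rfl⟩
  · rintro ⟨j, ℓ, hj, rfl⟩
    exact ⟨⟨j, ℓ⟩, hj, rfl⟩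

lemma mem_bigBody {w : PV X Y A B} :
    w ∈ bigBody I d ↔ ∃ x y i, (x, y) ∈ I.E ∧ i ∈ Finset.Icc 1 d ∧ w = PV.e x y i := by
  simp only [bigBody, Finset.mem_image, Finset.mem_product]
  constructor
  · rintro ⟨⟨⟨x, y⟩, i⟩, ⟨hE, hi⟩, rfl⟩
    exact ⟨x, y, i, hE, hi, rfl⟩
  · rintro ⟨x, y, i, hE, hi, rfl⟩
    exact ⟨⟨⟨x, y⟩, i⟩, ⟨hE, hi⟩, rfl⟩

lemma mem_PsiCNF {C : Clause (PV X Y A B)} :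
    C ∈ PsiCNF I d ↔ C ∈ clA I d ∨ C ∈ clB I d ∨ C ∈ clC I d ∨ C ∈ clD I d := by
  simp only [PsiCNF, Finset.mem_union]
  tauto

lemma clA_subset : clA I d ⊆ PsiCNF I d := fun C hC => mem_PsiCNF.2 (Or.inl hC)
lemma clB_subset : clB I d ⊆ PsiCNF I d := fun C hC => mem_PsiCNF.2 (Or.inr (Or.inl hC))
lemma clC_subset : clC I d ⊆ PsiCNF I d :=
  fun C hC => mem_PsiCNF.2 (Or.inr (Or.inr (Or.inl hC)))
lemma clD_subset : clD I d ⊆ PsiCNF I d :=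
  fun C hC => mem_PsiCNF.2 (Or.inr (Or.inr (Or.inr hC)))

lemma mem_PhiCNF {C : Clause (PV X Y A B)} :
    C ∈ PhiCNF I d t ↔ C ∈ PsiCNF I d ∨ C ∈ clE X Y A B t := by
  simp only [PhiCNF, Finset.mem_union]

lemma psi_subset_phi : PsiCNF I d ⊆ PhiCNF I d t := fun C hC => mem_PhiCNF.2 (Or.inl hC)

/-- Heads of the canonical CNF are active (and, in particular, not `v`-variables). -/
lemma phi_headActive {C : Clause (PV X Y A B)} (hC : C ∈ PhiCNF I d t) :
    ∃ hd, C.pos = {hd} ∧ Active I d hd := by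
  rcases mem_PhiCNF.1 hC with hC | hC
  · rcases mem_PsiCNF.1 hC with hC | hC | hC | hC
    · obtain ⟨x, y, i, aa, b, hE, hi, _, rfl⟩ := mem_clA.1 hC
      exact ⟨_, rfl, hE, hi⟩
    · obtain ⟨x, y, i, b, hE, hi, rfl⟩ := mem_clB.1 hC
      exact ⟨_, rfl, hE, hi⟩
    · obtain ⟨x, y, i, b, hE, hi, rfl⟩ := mem_clC.1 hC
      exact ⟨_, rfl, hE, hi⟩
    · obtain ⟨ℓ, rfl⟩ := mem_clD.1 hC
      exact ⟨_, rfl, trivial⟩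
  · obtain ⟨j, ℓ, hj, rfl⟩ := mem_clE.1 hC
    exact ⟨_, rfl, trivial⟩

lemma phi_singletonPos : SingletonPos (PhiCNF I d t) := by
  intro C hC
  obtain ⟨hd, hpos, _⟩ := phi_headActive hC
  exact ⟨hd, hpos⟩

lemma psi_singletonPos : SingletonPos (PsiCNF I d) := by
  intro C hC
  obtain ⟨hd, hpos, _⟩ := phi_headActive (t := 0) (psi_subset_phi (t := 0) hC)
  exact ⟨hd, hpos⟩

/-- `Ψ` contains no `v`-variables. -/
lemma psi_no_v {C : Clause (PV X Y A B)} (hC : C ∈ PsiCNF I d) (p : ℕ) :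
    PV.v p ∉ C.pos ∧ PV.v p ∉ C.neg := by
  rcases mem_PsiCNF.1 hC with hC | hC | hC | hC
  · obtain ⟨x, y, i, aa, b, _, _, _, rfl⟩ := mem_clA.1 hC
    simp
  · obtain ⟨x, y, i, b, _, _, rfl⟩ := mem_clB.1 hC
    constructor
    · simp
    · simp only [Finset.mem_image]
      rintro ⟨z, _, h⟩
      cases h
  · obtain ⟨x, y, i, b, _, _, rfl⟩ := mem_clC.1 hC
    simp
  · obtain ⟨ℓ, rfl⟩ := mem_clD.1 hC
    constructor
    · simp
    · simp only [mem_bigBody (I := I) (d := d)]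
      rintro ⟨x, y, i, _, _, h⟩
      cases h

/-- `v`-variables occurring in `Φ` occur negatively, with index in `[t]`. -/
lemma phi_v_mem {C : Clause (PV X Y A B)} (hC : C ∈ PhiCNF I d t) (p : ℕ) :
    PV.v p ∉ C.pos ∧ (PV.v p ∈ C.neg → p ∈ Finset.Icc 1 t) := by
  rcases mem_PhiCNF.1 hC with hC | hC
  · obtain ⟨h1, h2⟩ := psi_no_v hC p
    exact ⟨h1, fun h => absurd h h2⟩
  · obtain ⟨j, ℓ, hj, rfl⟩ := mem_clE.1 hC
    refine ⟨by simp, ?_⟩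
    simp only [Finset.mem_singleton]
    rintro h
    cases h
    exact hj

end CanonicalFacts

section Chase
set_option linter.unusedSectionVars false

variable {X Y A B : Type*} [Fintype X] [Fintype Y] [Fintype A] [Fintype B]
  [DecidableEq X] [DecidableEq Y] [DecidableEq A] [DecidableEq B]
variable {I : LabelCover X Y A B} {d t : ℕ}

lemma not_eval_iff {V : Type*} {C : Clause V} {a : V → Bool} :
    ¬ C.eval a ↔ (∀ z ∈ C.pos, a z = false) ∧ ∀ z ∈ C.neg, a z = true := by
  unfold Clause.eval
  push_neg
  constructor
  · rintro ⟨h1, h2⟩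
    exact ⟨fun z hz => by simpa using h1 z hz, fun z hz => by simpa using h2 z hz⟩
  · rintro ⟨h1, h2⟩
    exact ⟨fun z hz => by simp [h1 z hz], fun z hz => by simp [h2 z hz]⟩

/-- Forward chaining from a total cover derives every active variable. -/
lemma chase {f : X → Finset A} {g : Y → Finset B} (hcov : I.IsTotalCover f g)
    {Q : Set (PV X Y A B)}
    (hqX : ∀ z aa, aa ∈ f z → PV.u (Sum.inl (z, aa)) ∈ Q)
    (hqY : ∀ y : Y, ∃ b ∈ g y, PV.u (Sum.inr (y, b)) ∈ Q) :
    ∀ w : PV X Y A B, Active I d w → Deriv (PsiCNF I d) Q w := by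
  have stepE : ∀ x y i, (x, y) ∈ I.E → i ∈ Finset.Icc 1 d →
      Deriv (PsiCNF I d) Q (PV.e x y i) := by
    intro x y i hE hi
    obtain ⟨b, hb, hbQ⟩ := hqY y
    refine Deriv.step (clB_subset (mem_clB.2 ⟨x, y, i, b, hE, hi, rfl⟩)) rfl ?_
    intro w hw
    simp only [Finset.mem_image] at hw
    obtain ⟨z, hz, rfl⟩ := hw
    have hzE : (z, y) ∈ I.E := by simpa [Nbr] using hz
    obtain ⟨aa, haa, hcst⟩ := hcov.2 (z, y) hzE b hb
    refine Deriv.step (clA_subset (mem_clA.2 ⟨z, y, i, aa, b, hzE, hi, hcst, rfl⟩)) rfl ?_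
    intro w hw
    rcases Finset.mem_insert.1 hw with rfl | hw
    · exact Deriv.base (hqX z aa haa)
    · rw [Finset.mem_singleton] at hw
      subst hw
      exact Deriv.base hbQ
  have stepU : ∀ ℓ, Deriv (PsiCNF I d) Q (PV.u ℓ) := by
    intro ℓ
    refine Deriv.step (clD_subset (mem_clD.2 ⟨ℓ, rfl⟩)) rfl ?_
    intro w hw
    obtain ⟨x, y, i, hE, hi, rfl⟩ := mem_bigBody.1 hw
    exact stepE x y i hE hi
  intro w hw
  cases w with
  | u ℓ => exact stepU ℓ
  | e x y i => exact stepE x y i hw.1 hw.2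
  | el x y b i =>
    refine Deriv.step (clC_subset (mem_clC.2 ⟨x, y, i, b, hw.1, hw.2, rfl⟩)) rfl ?_
    intro z hz
    rw [Finset.mem_singleton] at hz
    subst hz
    exact stepE x y i hw.1 hw.2
  | v p => exact absurd hw (by simp [Active])

/-- From `v(j)`, the canonical formula derives every active variable. -/
lemma phi_derives_active {j : ℕ} (hj : j ∈ Finset.Icc 1 t)
    (hfeas : ∃ f g, I.IsTotalCover f g) :
    ∀ w : PV X Y A B, Active I d w → Deriv (PhiCNF I d t) {PV.v j} w := by
  obtain ⟨f, g, hcov⟩ := hfeas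
  have hu : ∀ ℓ, Deriv (PhiCNF I d t) {PV.v j} (PV.u ℓ : PV X Y A B) := by
    intro ℓ
    refine Deriv.step (mem_PhiCNF.2 (Or.inr (mem_clE.2 ⟨j, ℓ, hj, rfl⟩))) rfl ?_
    intro w hw
    rw [Finset.mem_singleton] at hw
    subst hw
    exact Deriv.base rfl
  intro w hw
  refine deriv_cut (Q' := {w' | ∃ ℓ, w' = PV.u ℓ}) ?_ ?_
  · rintro q ⟨ℓ, rfl⟩
    exact hu ℓ
  · refine deriv_monoG (psi_subset_phi) (chase hcov ?_ ?_ w hw)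
    · exact fun z aa _ => ⟨_, rfl⟩
    · intro y
      obtain ⟨b, hb⟩ := hcov.1 y
      exact ⟨b, hb, _, rfl⟩

/-- Is a variable a `v`-variable? -/
def isV : PV X Y A B → Bool
  | PV.v _ => true
  | _ => false

lemma isV_false_iff {z : PV X Y A B} : isV z = false ↔ ∀ q, z ≠ PV.v q := by
  cases z <;> simp [isV]

/-- Set all `v`-variables to false. -/
def killV (a : PV X Y A B → Bool) : PV X Y A B → Bool
  | PV.v _ => false
  | z => a z

lemma killV_eq {a : PV X Y A B → Bool} {z : PV X Y A B} (h : ∀ q, z ≠ PV.v q) :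
    killV a z = a z := by
  cases z <;> first | rfl | exact absurd rfl (h _)

lemma killV_v {a : PV X Y A B → Bool} {q : ℕ} : killV a (PV.v q) = false := rfl

lemma psi_eval_killV {C : Clause (PV X Y A B)} (hC : C ∈ PsiCNF I d)
    {a : PV X Y A B → Bool} : C.eval (killV a) ↔ C.eval a := by
  refine Clause.eval_congr ?_ ?_
  · intro z hz
    refine killV_eq fun q hzq => ?_
    exact (psi_no_v hC q).1 (hzq ▸ hz)
  · intro z hz
    refine killV_eq fun q hzq => ?_
    exact (psi_no_v hC q).2 (hzq ▸ hz)

lemma killV_sat_phi {a : PV X Y A B → Bool} (hpsi : evalCNF (PsiCNF I d) a) :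
    evalCNF (PhiCNF I d t) (killV a) := by
  intro C hC
  rcases mem_PhiCNF.1 hC with hC' | hC'
  · exact (psi_eval_killV hC').2 (hpsi C hC')
  · obtain ⟨p, ℓ, _, rfl⟩ := mem_clE.1 hC'
    exact Or.inr ⟨PV.v p, Finset.mem_singleton_self _, killV_v⟩

end Chase


section Upsilon
set_option linter.unusedSectionVars false

variable {X Y A B : Type*} [Fintype X] [Fintype Y] [Fintype A] [Fintype B]
  [DecidableEq X] [DecidableEq Y] [DecidableEq A] [DecidableEq B]
variable {I : LabelCover X Y A B} {d t : ℕ} {Υ : Finset (Clause (PV X Y A B))}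

/-- The `v`-free part of `Υ`. -/
def UpsF (Υ : Finset (Clause (PV X Y A B))) : Finset (Clause (PV X Y A B)) :=
  Υ.filter fun C => ∀ z ∈ C.neg, isV z = false

/-- The set `S_j` of heads of clauses of `Υ` with body `{v(j)}`. -/
def Qj (Υ : Finset (Clause (PV X Y A B))) (j : ℕ) : Set (PV X Y A B) :=
  {w | (⟨{w}, {PV.v j}⟩ : Clause (PV X Y A B)) ∈ Υ}

/-- Heads of prime implicates of `h` are active. -/
lemma ups_headActive (hprime : ∀ C ∈ Υ, PrimeImplicate (hFun I d t) C)
    {C : Clause (PV X Y A B)} (hC : C ∈ Υ) {w : PV X Y A B} (hpos : C.pos = {w}) :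
    Active I d w := by
  classical
  by_contra hact
  set a : PV X Y A B → Bool := fun z => decide (z ≠ w) with ha
  have hsat : evalCNF (PhiCNF I d t) a := by
    intro C' hC'
    obtain ⟨hd, hp, hactv⟩ := phi_headActive hC'
    refine Or.inl ⟨hd, by rw [hp]; exact Finset.mem_singleton_self _, ?_⟩
    simp only [ha, decide_eq_true_eq]
    rintro rfl
    exact hact hactv
  have hne : ¬ C.eval a := by
    rintro (⟨z, hz, haz⟩ | ⟨z, hz, haz⟩)
    · rw [hpos, Finset.mem_singleton] at hz
      subst hz
      simp [ha] at haz
    · have hzw : z = w := by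
        by_contra hne
        simp [ha, hne] at haz
      exact (Finset.disjoint_left.1 (hprime C hC).1
        (hpos ▸ Finset.mem_singleton_self w)) (hzw ▸ hz)
  exact (hprime C hC).2.1 a hne hsat

/-- Structure of clauses of `Υ` containing a `v`-variable in the body. -/
lemma ups_v_structure (hfeas : ∃ f g, I.IsTotalCover f g)
    (hPH : IsPureHornCNF Υ)
    (hprime : ∀ C ∈ Υ, PrimeImplicate (hFun I d t) C)
    {C : Clause (PV X Y A B)} (hC : C ∈ Υ) {q : ℕ} (hq : PV.v q ∈ C.neg) :
    q ∈ Finset.Icc 1 t ∧ C.neg = {PV.v q} := by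
  classical
  obtain ⟨w, hpos⟩ := (hPH C hC).2
  have hact : Active I d w := ups_headActive hprime hC hpos
  have hqI : q ∈ Finset.Icc 1 t := by
    by_contra hqn
    have himp : Implicate (hFun I d t) ⟨C.pos, C.neg.erase (PV.v q)⟩ := by
      intro a hne hh
      obtain ⟨h1, h2⟩ := not_eval_iff.1 hne
      set a' := Function.update a (PV.v q) true with ha'
      have hne' : ¬ C.eval a' := by
        refine not_eval_iff.2 ⟨?_, ?_⟩
        · intro z hz
          rw [hpos, Finset.mem_singleton] at hz
          rw [hz, ha', Function.update_of_ne (Active.ne_v hact q) _ _]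
          exact h1 w (hpos ▸ Finset.mem_singleton_self w)
        · intro z hz
          by_cases hzq : z = PV.v q
          · subst hzq
            simp [ha']
          · rw [ha', Function.update_of_ne hzq _ _]
            exact h2 z (Finset.mem_erase.2 ⟨hzq, hz⟩)
      have hh' : hFun I d t a' := by
        intro C' hC'
        refine (Clause.eval_congr ?_ ?_).1 (hh C' hC')
        · intro z hz
          rw [ha', Function.update_of_ne _ _ _]
          intro hzq
          exact (phi_v_mem hC' q).1 (hzq ▸ hz)
        · intro z hz
          rw [ha', Function.update_of_ne _ _ _]
          intro hzq
          exact hqn ((phi_v_mem hC' q).2 (hzq ▸ hz))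
      exact (hprime C hC).2.1 a' hne' hh'
    exact (hprime C hC).2.2.2 (PV.v q) hq himp
  refine ⟨hqI, ?_⟩
  have huniq : ∀ w' ∈ C.neg, w' = PV.v q := by
    intro w' hw'
    by_contra hne
    have himp : Implicate (hFun I d t) ⟨C.pos, C.neg.erase w'⟩ := by
      intro a hna hh
      obtain ⟨h1, h2⟩ := not_eval_iff.1 hna
      have hvq : a (PV.v q) = true :=
        h2 _ (Finset.mem_erase.2 ⟨fun h => hne h.symm, hq⟩)
      have : a w = true := by
        refine deriv_true hh ?_ (phi_derives_active hqI hfeas w hact)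
        intro z hz
        rw [Set.mem_singleton_iff] at hz
        subst hz
        exact hvq
      rw [h1 w (hpos ▸ Finset.mem_singleton_self w)] at this
      cases this
    exact (hprime C hC).2.2.2 w' hw' himp
  exact Finset.eq_singleton_iff_unique_mem.2 ⟨hq, huniq⟩

/-- If the assignment satisfies the `v`-free part of `Υ`, it satisfies `Ψ`. -/
lemma upsF_sat_psi (hPH : IsPureHornCNF Υ)
    (hprime : ∀ C ∈ Υ, PrimeImplicate (hFun I d t) C)
    (hrep : Represents Υ (hFun I d t))
    {a : PV X Y A B → Bool} (hfree : evalCNF (UpsF Υ) a) :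
    evalCNF (PsiCNF I d) a := by
  have hkv : evalCNF Υ (killV a) := by
    intro C hC
    by_cases hfr : ∀ z ∈ C.neg, isV z = false
    · obtain ⟨w, hpos⟩ := (hPH C hC).2
      refine (Clause.eval_congr ?_ ?_).2 (hfree C (Finset.mem_filter.2 ⟨hC, hfr⟩))
      · intro z hz
        rw [hpos, Finset.mem_singleton] at hz
        rw [hz]
        exact killV_eq (Active.ne_v (ups_headActive hprime hC hpos))
      · intro z hz
        exact killV_eq (isV_false_iff.1 (hfr z hz))
    · push_neg at hfr
      obtain ⟨z, hz, hzv⟩ := hfr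
      have : ∃ q, z = PV.v q := by
        cases z <;> simp [isV] at hzv ⊢
      obtain ⟨q, rfl⟩ := this
      exact Or.inr ⟨PV.v q, hz, killV_v⟩
  have hh : evalCNF (PhiCNF I d t) (killV a) := (hrep (killV a)).1 hkv
  intro C hC
  exact (psi_eval_killV hC).1 (hh C (psi_subset_phi hC))

end Upsilon


section Upsilon2
set_option linter.unusedSectionVars false

variable {X Y A B : Type*} [Fintype X] [Fintype Y] [Fintype A] [Fintype B]
  [DecidableEq X] [DecidableEq Y] [DecidableEq A] [DecidableEq B]
variable {I : LabelCover X Y A B} {d t : ℕ} {Υ : Finset (Clause (PV X Y A B))}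

/-- `Ψ` entails the `v`-free part of `Υ`. -/
lemma psi_entails_upsF (hPH : IsPureHornCNF Υ)
    (hprime : ∀ C ∈ Υ, PrimeImplicate (hFun I d t) C)
    (hrep : Represents Υ (hFun I d t))
    {a : PV X Y A B → Bool} (hpsi : evalCNF (PsiCNF I d) a) :
    evalCNF (UpsF Υ) a := by
  have h1 : evalCNF (PhiCNF I d t) (killV a) := killV_sat_phi hpsi
  have h2 : evalCNF Υ (killV a) := (hrep _).2 h1
  intro C hC
  obtain ⟨hCu, hfr⟩ := Finset.mem_filter.1 hC
  obtain ⟨w, hpos⟩ := (hPH C hCu).2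
  refine (Clause.eval_congr ?_ ?_).1 (h2 C hCu)
  · intro z hz
    rw [hpos, Finset.mem_singleton] at hz
    rw [hz]
    exact killV_eq (Active.ne_v (ups_headActive hprime hCu hpos))
  · intro z hz
    exact killV_eq (isV_false_iff.1 (hfr z hz))

lemma upsF_singletonPos (hPH : IsPureHornCNF Υ) : SingletonPos (UpsF Υ) :=
  fun C hC => (hPH C (Finset.mem_filter.1 hC).1).2

lemma ups_singletonPos (hPH : IsPureHornCNF Υ) : SingletonPos Υ :=
  fun C hC => (hPH C hC).2

/-- Variables derivable from `Qj` via the `v`-free part are never `v`-variables. -/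
lemma deriv_upsF_ne_v (hPH : IsPureHornCNF Υ)
    (hprime : ∀ C ∈ Υ, PrimeImplicate (hFun I d t) C)
    {j : ℕ} {w : PV X Y A B} (h : Deriv (UpsF Υ) (Qj Υ j) w) : ∀ q, w ≠ PV.v q := by
  induction h with
  | base hw => exact Active.ne_v (ups_headActive hprime hw rfl)
  | step hC hpos _ _ =>
    exact Active.ne_v (ups_headActive hprime (Finset.mem_filter.1 hC).1 hpos)

/-- Forward chaining in `Υ` from `{v(j)}` factors through `S_j`. -/
lemma K_decomp (hfeas : ∃ f g, I.IsTotalCover f g) (hPH : IsPureHornCNF Υ)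
    (hprime : ∀ C ∈ Υ, PrimeImplicate (hFun I d t) C)
    {j : ℕ} {w : PV X Y A B} (h : Deriv Υ {PV.v j} w) :
    w = PV.v j ∨ Deriv (UpsF Υ) (Qj Υ j) w := by
  induction h with
  | base hw => exact Or.inl hw
  | step hC hpos hneg ih =>
    rename_i C w'
    by_cases hv : ∃ q, PV.v q ∈ C.neg
    · obtain ⟨q, hq⟩ := hv
      obtain ⟨hqI, hnegEq⟩ := ups_v_structure hfeas hPH hprime hC hq
      rcases ih (PV.v q) (hnegEq ▸ Finset.mem_singleton_self _) with h1 | h1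
      · have hqj : q = j := by injection h1
        right
        refine Deriv.base (show (⟨{w'}, {PV.v j}⟩ : Clause (PV X Y A B)) ∈ Υ from ?_)
        have hCeq : C = ⟨{w'}, {PV.v j}⟩ := by
          cases C
          simp only [Clause.mk.injEq]
          exact ⟨hpos, by rw [← hqj]; exact hnegEq⟩
        exact hCeq ▸ hC
      · exact absurd rfl (deriv_upsF_ne_v hPH hprime h1 q)
    · push_neg at hv
      right
      refine Deriv.step (C := C) (Finset.mem_filter.2 ⟨hC, ?_⟩) hpos ?_
      · intro z hz
        refine isV_false_iff.2 fun q hzq => ?_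
        exact hv q (hzq ▸ hz)
      · intro z hz
        rcases ih z hz with h1 | h1
        · exact absurd (h1 ▸ hz) (by simpa using hv j)
        · exact h1

/-- Every active variable is derivable from `S_j` within `Ψ`. -/
lemma derivPsi_Qj_active (hfeas : ∃ f g, I.IsTotalCover f g) (hPH : IsPureHornCNF Υ)
    (hprime : ∀ C ∈ Υ, PrimeImplicate (hFun I d t) C)
    (hrep : Represents Υ (hFun I d t))
    {j : ℕ} (hj : j ∈ Finset.Icc 1 t) {w : PV X Y A B} (hact : Active I d w) :
    Deriv (PsiCNF I d) (Qj Υ j) w := by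
  have h1 : Deriv (PhiCNF I d t) {PV.v j} w := phi_derives_active hj hfeas w hact
  have h2 : Deriv Υ {PV.v j} w :=
    deriv_transfer (ups_singletonPos hPH) (fun a hA => (hrep a).1 hA) h1
  rcases K_decomp hfeas hPH hprime h2 with h3 | h3
  · exact absurd h3 (Active.ne_v hact j)
  · exact deriv_transfer psi_singletonPos
      (fun a hA => psi_entails_upsF hPH hprime hrep hA) h3

end Upsilon2


section CCLemma
set_option linter.unusedSectionVars false

variable {X Y A B : Type*} [Fintype X] [Fintype Y] [Fintype A] [Fintype B]
  [DecidableEq X] [DecidableEq Y] [DecidableEq A] [DecidableEq B]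
variable {I : LabelCover X Y A B} {d t : ℕ}

/-- The covering condition at `ys` extracted from a seed set `Q`. -/
def CCond (I : LabelCover X Y A B) (Q : Set (PV X Y A B)) (ys : Y) : Prop :=
  ∃ c, PV.u (Sum.inr (ys, c)) ∈ Q ∧
    ∀ z, (z, ys) ∈ I.E → ∃ α, PV.u (Sum.inl (z, α)) ∈ Q ∧ (α, c) ∈ I.cst (z, ys)

/-- If a `u`-variable outside `Q` is derivable from `Q`, and no variable of `Q` has
coordinates `(ys, i₀)`, then `Q` contains a label of `ys` covering all edges at `ys`
with labels from `Q`. -/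
lemma cc_of_deriv {Q : Set (PV X Y A B)} {ys : Y} {i₀ : ℕ}
    (hx₀ : ∃ x₀, (x₀, ys) ∈ I.E)
    (hi₀ : i₀ ∈ Finset.Icc 1 d)
    (hnoseedE : ∀ x', PV.e x' ys i₀ ∉ Q)
    (hnoseedEl : ∀ x' c, PV.el x' ys c i₀ ∉ Q)
    {ℓ₀ : Lab X Y A B} (hw₀n : PV.u ℓ₀ ∉ Q)
    (hder : Deriv (PsiCNF I d) Q (PV.u ℓ₀)) : CCond I Q ys := by
  classical
  set P : PV X Y A B → Prop := fun w =>
    (∀ ℓ, w = PV.u ℓ → w ∈ Q ∨ CCond I Q ys) ∧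
    (∀ x', w = PV.e x' ys i₀ → CCond I Q ys) ∧
    (∀ x' c, w = PV.el x' ys c i₀ → CCond I Q ys ∨
      (PV.u (Sum.inr (ys, c)) ∈ Q ∧
        ∃ α, PV.u (Sum.inl (x', α)) ∈ Q ∧ (α, c) ∈ I.cst (x', ys))) with hPdef
  have main : ∀ w, Deriv (PsiCNF I d) Q w → P w := by
    intro w hw
    induction hw with
    | base hq =>
      refine ⟨fun ℓ _ => Or.inl hq, fun x' hwq => ?_, fun x' c hwq => ?_⟩
      · exact absurd (hwq ▸ hq) (hnoseedE x')
      · exact absurd (hwq ▸ hq) (hnoseedEl x' c)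
    | step hC hpos hneg ih =>
      rename_i C w0
      rcases mem_PsiCNF.1 hC with hA | hB | hCc | hD
      · obtain ⟨x, y, i, aa, b, hE, hi, hcst, rfl⟩ := mem_clA.1 hA
        have hw : PV.el x y b i = w0 :=
          Finset.singleton_inj.1 (hpos : ({PV.el x y b i} : Finset _) = {w0})
        subst hw
        refine ⟨fun ℓ h => (nomatch h), fun x' h => (nomatch h), ?_⟩
        intro x' c h
        injection h with h1 h2 h3 h4
        subst h1; subst h2; subst h3; subst h4
        have ih1 := (ih (PV.u (Sum.inl (x, aa))) (Finset.mem_insert_self _ _)).1 _ rfl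
        have ih2 := (ih (PV.u (Sum.inr (y, b)))
          (Finset.mem_insert_of_mem (Finset.mem_singleton_self _))).1 _ rfl
        rcases ih1 with ih1 | ih1
        · rcases ih2 with ih2 | ih2
          · exact Or.inr ⟨ih2, aa, ih1, hcst⟩
          · exact Or.inl ih2
        · exact Or.inl ih1
      · obtain ⟨x, y, i, b, hE, hi, rfl⟩ := mem_clB.1 hB
        have hw : PV.e x y i = w0 :=
          Finset.singleton_inj.1 (hpos : ({PV.e x y i} : Finset _) = {w0})
        subst hw
        refine ⟨fun ℓ h => (nomatch h), ?_, fun x' c h => (nomatch h)⟩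
        intro x' h
        injection h with h1 h2 h3
        subst h1; subst h2; subst h3
        by_cases hcc : CCond I Q y
        · exact hcc
        · have hxN : x ∈ Nbr I y := by simp [Nbr, hE]
          have ihx := (ih (PV.el x y b i)
            (Finset.mem_image.2 ⟨x, hxN, rfl⟩)).2.2 x b rfl
          rcases ihx with ihx | ⟨hbQ, _⟩
          · exact ihx
          refine ⟨b, hbQ, fun z hz => ?_⟩
          have hzN : z ∈ Nbr I y := by simp [Nbr, hz]
          have ihz := (ih (PV.el z y b i)
            (Finset.mem_image.2 ⟨z, hzN, rfl⟩)).2.2 z b rfl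
          rcases ihz with ihz | ⟨_, α, hαQ, hαcst⟩
          · exact absurd ihz hcc
          · exact ⟨α, hαQ, hαcst⟩
      · obtain ⟨x, y, i, b, hE, hi, rfl⟩ := mem_clC.1 hCc
        have hw : PV.el x y b i = w0 :=
          Finset.singleton_inj.1 (hpos : ({PV.el x y b i} : Finset _) = {w0})
        subst hw
        refine ⟨fun ℓ h => (nomatch h), fun x' h => (nomatch h), ?_⟩
        intro x' c h
        injection h with h1 h2 h3 h4
        subst h1; subst h2; subst h3; subst h4
        exact Or.inl ((ih (PV.e x y i) (Finset.mem_singleton_self _)).2.1 x rfl)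
      · obtain ⟨ℓ, rfl⟩ := mem_clD.1 hD
        have hw : PV.u ℓ = w0 :=
          Finset.singleton_inj.1 (hpos : ({PV.u ℓ} : Finset _) = {w0})
        subst hw
        refine ⟨?_, fun x' h => (nomatch h), fun x' c h => (nomatch h)⟩
        intro ℓ' _
        obtain ⟨x₀, hx₀E⟩ := hx₀
        refine Or.inr ((ih (PV.e x₀ ys i₀)
          (mem_bigBody.2 ⟨x₀, ys, i₀, hx₀E, hi₀, rfl⟩)).2.1 x₀ rfl)
  rcases (main _ hder).1 ℓ₀ rfl with h | h
  · exact absurd h hw₀n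
  · exact h

end CCLemma


section Drop
set_option linter.unusedSectionVars false

variable {X Y A B : Type*} [Fintype X] [Fintype Y] [Fintype A] [Fintype B]
  [DecidableEq X] [DecidableEq Y] [DecidableEq A] [DecidableEq B]
variable {I : LabelCover X Y A B} {d t : ℕ}

lemma drop_stepEl {Q : Set (PV X Y A B)} {ys : Y} {cs b' : B}
    (hcs : PV.u (Sum.inr (ys, cs)) ∈ Q) (hcb : cs ≠ b')
    (hwit : ∀ z, (z, ys) ∈ I.E → ∃ α, PV.u (Sum.inl (z, α)) ∈ Q ∧ (α, cs) ∈ I.cst (z, ys)) :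
    (∀ z i, (z, ys) ∈ I.E → i ∈ Finset.Icc 1 d →
        Deriv (PsiCNF I d) (Q \ {PV.u (Sum.inr (ys, b'))}) (PV.el z ys cs i)) ∧
    (∀ x i, (x, ys) ∈ I.E → i ∈ Finset.Icc 1 d →
        Deriv (PsiCNF I d) (Q \ {PV.u (Sum.inr (ys, b'))}) (PV.e x ys i)) ∧
    (∀ x b i, (x, ys) ∈ I.E → i ∈ Finset.Icc 1 d →
        Deriv (PsiCNF I d) (Q \ {PV.u (Sum.inr (ys, b'))}) (PV.el x ys b i)) := by
  set Q' : Set (PV X Y A B) := Q \ {PV.u (Sum.inr (ys, b'))} with hQ'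
  have stepA : ∀ z i, (z, ys) ∈ I.E → i ∈ Finset.Icc 1 d →
      Deriv (PsiCNF I d) Q' (PV.el z ys cs i) := by
    intro z i hz hi
    obtain ⟨α, hαQ, hαc⟩ := hwit z hz
    refine Deriv.step (clA_subset (mem_clA.2 ⟨z, ys, i, α, cs, hz, hi, hαc, rfl⟩)) rfl ?_
    intro w hw
    rcases Finset.mem_insert.1 hw with rfl | hw
    · refine Deriv.base ⟨hαQ, ?_⟩
      simp only [Set.mem_singleton_iff]
      intro h
      injection h with h'
      cases h'
    · rw [Finset.mem_singleton] at hw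
      subst hw
      refine Deriv.base ⟨hcs, ?_⟩
      simp only [Set.mem_singleton_iff]
      intro h
      injection h with h'
      injection h' with h''
      exact hcb (by injection h'')
  have stepB : ∀ x i, (x, ys) ∈ I.E → i ∈ Finset.Icc 1 d →
      Deriv (PsiCNF I d) Q' (PV.e x ys i) := by
    intro x i hx hi
    refine Deriv.step (clB_subset (mem_clB.2 ⟨x, ys, i, cs, hx, hi, rfl⟩)) rfl ?_
    intro w hw
    obtain ⟨z, hz, rfl⟩ := Finset.mem_image.1 hw
    exact stepA z i (by simpa [Nbr] using hz) hi
  refine ⟨stepA, stepB, ?_⟩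
  intro x b i hx hi
  refine Deriv.step (clC_subset (mem_clC.2 ⟨x, ys, i, b, hx, hi, rfl⟩)) rfl ?_
  intro w hw
  rw [Finset.mem_singleton] at hw
  subst hw
  exact stepB x i hx hi

/-- Dropping a sibling label from the seed set preserves derivability (up to the
dropped variable itself). -/
lemma deriv_drop {Q : Set (PV X Y A B)} {ys : Y} {cs b' : B}
    (hcs : PV.u (Sum.inr (ys, cs)) ∈ Q) (hcb : cs ≠ b')
    (hwit : ∀ z, (z, ys) ∈ I.E → ∃ α, PV.u (Sum.inl (z, α)) ∈ Q ∧ (α, cs) ∈ I.cst (z, ys))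
    {w : PV X Y A B} (h : Deriv (PsiCNF I d) Q w) :
    w = PV.u (Sum.inr (ys, b')) ∨
      Deriv (PsiCNF I d) (Q \ {PV.u (Sum.inr (ys, b'))}) w := by
  classical
  induction h with
  | base hq =>
    by_cases hw : _root_.id ‹_› = PV.u (Sum.inr (ys, b'))
    · exact Or.inl hw
    · exact Or.inr (Deriv.base ⟨hq, hw⟩)
  | step hC hpos hneg ih =>
    rename_i C w0
    by_cases hall : ∀ u ∈ C.neg, Deriv (PsiCNF I d) (Q \ {PV.u (Sum.inr (ys, b'))}) u
    · exact Or.inr (Deriv.step hC hpos hall)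
    · push_neg at hall
      obtain ⟨z, hz, hnd⟩ := hall
      have hzd : z = PV.u (Sum.inr (ys, b')) := by
        rcases ih z hz with h | h
        · exact h
        · exact absurd h hnd
      subst hzd
      rcases mem_PsiCNF.1 hC with hA | hB | hCc | hD
      · obtain ⟨x, y, i, aa, b, hE, hi, hcst, rfl⟩ := mem_clA.1 hA
        have hmem := hz
        rcases Finset.mem_insert.1 hmem with h | h
        · exfalso
          injection h with h'
          cases h'
        · rw [Finset.mem_singleton] at h
          have h1 : ys = y := by
            injection h with h'
            injection h' with h''
            injection h''
          have h2 : b' = b := by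
            injection h with h'
            injection h' with h''
            injection h''
          subst h1
          subst h2
          have hw0 : PV.el x ys b' i = w0 :=
            Finset.singleton_inj.1 (hpos : ({PV.el x ys b' i} : Finset _) = {w0})
          subst hw0
          exact Or.inr ((drop_stepEl hcs hcb hwit).2.2 x b' i hE hi)
      · obtain ⟨x, y, i, b, hE, hi, rfl⟩ := mem_clB.1 hB
        exfalso
        obtain ⟨z', _, h⟩ := Finset.mem_image.1 hz
        cases h
      · obtain ⟨x, y, i, b, hE, hi, rfl⟩ := mem_clC.1 hCc
        exfalso
        rw [Finset.mem_singleton] at hz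
        cases hz
      · obtain ⟨ℓ, rfl⟩ := mem_clD.1 hD
        exfalso
        obtain ⟨x, y, i, _, _, h⟩ := mem_bigBody.1 hz
        cases h

/-- The dropped sibling is still derivable from the reduced seed set. -/
lemma deriv_dropped {Q : Set (PV X Y A B)} {ys : Y} {cs b' : B}
    (hcs : PV.u (Sum.inr (ys, cs)) ∈ Q) (hcb : cs ≠ b')
    (hwit : ∀ z, (z, ys) ∈ I.E → ∃ α, PV.u (Sum.inl (z, α)) ∈ Q ∧ (α, cs) ∈ I.cst (z, ys))
    (hbig : ∀ w ∈ bigBody I d, Deriv (PsiCNF I d) Q w) :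
    Deriv (PsiCNF I d) (Q \ {PV.u (Sum.inr (ys, b'))}) (PV.u (Sum.inr (ys, b'))) := by
  refine Deriv.step (clD_subset (mem_clD.2 ⟨Sum.inr (ys, b'), rfl⟩)) rfl ?_
  intro z hz
  rcases deriv_drop hcs hcb hwit (hbig z hz) with h | h
  · exfalso
    obtain ⟨x, y, i, _, _, hzz⟩ := mem_bigBody.1 hz
    rw [h] at hzz
    cases hzz
  · exact h

end Drop


/-- Index extraction from a variable. -/
def pvIdx {X Y A B : Type*} : PV X Y A B → ℕ
  | PV.e _ _ i => i
  | PV.el _ _ _ i => i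
  | _ => 0

/-- With `d = 1 + rλ + sλ′`, if `Υ` is a clause minimum prime pure
Horn CNF representation of the canonical function `h`, then the labelings `f_j`
extracted from `Υ` satisfy `|f_j(y)| ≥ 1`; combined with the upper bound for prime
irredundant representations, `|f_j(y)| = 1` for all `j ∈ [t]` and `y ∈ Y`. -/
theorem fj_exactly_one_label
    {X Y A B : Type*} [Fintype X] [Fintype Y] [Fintype A] [Fintype B]
    [DecidableEq X] [DecidableEq Y] [DecidableEq A] [DecidableEq B]
    [Nonempty X] [Nonempty Y]
    (I : LabelCover X Y A B) (d t : ℕ) (ht : 1 ≤ t)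
    (hd : d = 1 + Fintype.card X * Fintype.card A + Fintype.card Y * Fintype.card B)
    (hnoIsoX : ∀ x : X, ∃ y, (x, y) ∈ I.E)
    (hnoIsoY : ∀ y : Y, ∃ x, (x, y) ∈ I.E)
    (hfeas : ∃ f g, I.IsTotalCover f g)
    (Υ : Finset (Clause (PV X Y A B)))
    (hPH : IsPureHornCNF Υ)
    (hprime : ∀ C ∈ Υ, PrimeImplicate (hFun I d t) C)
    (hrep : Represents Υ (hFun I d t))
    (hmin : ∀ Υ' : Finset (Clause (PV X Y A B)), IsPureHornCNF Υ' →
      Represents Υ' (hFun I d t) → Υ.card ≤ Υ'.card) :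
    ∀ j ∈ Finset.Icc 1 t, ∀ y : Y,
      1 ≤ (fjY Υ j y).card ∧ (fjY Υ j y).card = 1 := by
  classical
  intro j hj ys
  have hfeas' := hfeas
  obtain ⟨f, g, hcov⟩ := hfeas
  have hgne := hcov.1
  set gb : Y → B := fun y => (hgne y).choose with hgbdef
  have hgbm : ∀ y, gb y ∈ g y := fun y => (hgne y).choose_spec
  -- the cover finset
  set covF : Finset (PV X Y A B) :=
    ((Finset.univ : Finset (X × A)).image fun p => PV.u (Sum.inl p)) ∪
    ((Finset.univ : Finset Y).image fun y => PV.u (Sum.inr (y, gb y))) with hcovFdef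
  have hcovF_shape : ∀ q ∈ covF, ∃ ℓ, q = PV.u ℓ := by
    intro q hq
    rcases Finset.mem_union.1 hq with h | h
    · obtain ⟨p, _, rfl⟩ := Finset.mem_image.1 h
      exact ⟨_, rfl⟩
    · obtain ⟨p, _, rfl⟩ := Finset.mem_image.1 h
      exact ⟨_, rfl⟩
  have hcovF_card : covF.card ≤ Fintype.card X * Fintype.card A + Fintype.card Y := by
    refine le_trans (Finset.card_union_le _ _) ?_
    have h1 : ((Finset.univ : Finset (X × A)).image
        fun p => (PV.u (Sum.inl p) : PV X Y A B)).card ≤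
        Fintype.card X * Fintype.card A := by
      refine le_trans Finset.card_image_le ?_
      rw [Finset.card_univ, Fintype.card_prod]
    have h2 : ((Finset.univ : Finset Y).image
        fun y => (PV.u (Sum.inr (y, gb y)) : PV X Y A B)).card ≤
        Fintype.card Y := by
      refine le_trans Finset.card_image_le ?_
      rw [Finset.card_univ]
    omega
  -- chasing: a model of `Ψ` making `covF` true makes every active variable true
  have hchase : ∀ a : PV X Y A B → Bool, evalCNF (PsiCNF I d) a →
      (∀ q ∈ covF, a q = true) → ∀ w, Active I d w → a w = true := by
    intro a hpsi hq w hw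
    refine deriv_true hpsi (Q := ↑covF) (fun q hq' => hq q hq') (chase hcov ?_ ?_ w hw)
    · intro z aa _
      exact Finset.mem_coe.2 (Finset.mem_union_left _
        (Finset.mem_image.2 ⟨(z, aa), Finset.mem_univ _, rfl⟩))
    · intro y
      exact ⟨gb y, hgbm y, Finset.mem_coe.2 (Finset.mem_union_right _
        (Finset.mem_image.2 ⟨y, Finset.mem_univ _, rfl⟩))⟩
  -- the clauses of `Υ` mentioning `v(j)`
  set Filt : Finset (Clause (PV X Y A B)) := Υ.filter (fun C => PV.v j ∈ C.neg) with hFiltdef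
  have hUpsFsub : UpsF Υ ⊆ Υ.filter (fun C => PV.v j ∉ C.neg) := by
    intro C hC
    obtain ⟨h1, h2⟩ := Finset.mem_filter.1 hC
    refine Finset.mem_filter.2 ⟨h1, fun hmem => ?_⟩
    have := h2 _ hmem
    simp [isV] at this
  -- the replacement CNF bounding `Filt.card`
  set Υ' : Finset (Clause (PV X Y A B)) := Υ.filter (fun C => PV.v j ∉ C.neg) ∪
    covF.image (fun q => (⟨{q}, {PV.v j}⟩ : Clause (PV X Y A B))) with hΥ'def
  have hΥ'PH : IsPureHornCNF Υ' := by
    intro C hC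
    rcases Finset.mem_union.1 hC with h | h
    · exact hPH C (Finset.mem_filter.1 h).1
    · obtain ⟨q, hq, rfl⟩ := Finset.mem_image.1 h
      obtain ⟨ℓ, rfl⟩ := hcovF_shape q hq
      refine ⟨?_, ⟨_, rfl⟩⟩
      simp [Clause.IsClause]
  have hΥ'rep : Represents Υ' (hFun I d t) := by
    intro a
    constructor
    · intro ha
      refine (hrep a).1 ?_
      by_cases hvj : a (PV.v j) = true
      · have hUf : evalCNF (UpsF Υ) a := fun C hC =>
          ha C (Finset.mem_union_left _ (hUpsFsub hC))
        have hpsi := upsF_sat_psi hPH hprime hrep hUf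
        have hcq : ∀ q ∈ covF, a q = true := by
          intro q hq
          rcases ha _ (Finset.mem_union_right _ (Finset.mem_image.2 ⟨q, hq, rfl⟩)) with
            ⟨z, hz, hzt⟩ | ⟨z, hz, hzf⟩
          · rw [Finset.mem_singleton] at hz
            rwa [← hz]
          · rw [Finset.mem_singleton] at hz
            rw [hz, hvj] at hzf
            cases hzf
        intro C hC
        by_cases hneg : PV.v j ∈ C.neg
        · obtain ⟨w, hpos⟩ := (hPH C hC).2
          exact Or.inl ⟨w, hpos ▸ Finset.mem_singleton_self w,
            hchase a hpsi hcq w (ups_headActive hprime hC hpos)⟩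
        · exact ha C (Finset.mem_union_left _ (Finset.mem_filter.2 ⟨hC, hneg⟩))
      · intro C hC
        by_cases hneg : PV.v j ∈ C.neg
        · exact Or.inr ⟨PV.v j, hneg, by simpa using hvj⟩
        · exact ha C (Finset.mem_union_left _ (Finset.mem_filter.2 ⟨hC, hneg⟩))
    · intro hh C hC
      rcases Finset.mem_union.1 hC with h | h
      · exact (hrep a).2 hh C (Finset.mem_filter.1 h).1
      · obtain ⟨q, hq, rfl⟩ := Finset.mem_image.1 h
        obtain ⟨ℓ, rfl⟩ := hcovF_shape q hq
        exact hh _ (mem_PhiCNF.2 (Or.inr (mem_clE.2 ⟨j, ℓ, hj, rfl⟩)))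
  have hmj : Filt.card ≤ Fintype.card X * Fintype.card A + Fintype.card Y := by
    have h1 := hmin Υ' hΥ'PH hΥ'rep
    have h2 : Υ'.card ≤ (Υ.filter (fun C => PV.v j ∉ C.neg)).card + covF.card := by
      refine le_trans (Finset.card_union_le _ _) ?_
      have := Finset.card_image_le (s := covF)
        (f := fun q => (⟨{q}, {PV.v j}⟩ : Clause (PV X Y A B)))
      omega
    have h3 : Filt.card + (Υ.filter (fun C => PV.v j ∉ C.neg)).card = Υ.card := by
      rw [hFiltdef]
      exact Finset.card_filter_add_card_filter_not _
    omega
  -- a non-seeded index i₀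
  set seedIdx : Finset ℕ := (Finset.Icc 1 d).filter
    (fun i => (∃ x', (⟨{PV.e x' ys i}, {PV.v j}⟩ : Clause (PV X Y A B)) ∈ Υ) ∨
      ∃ x' c, (⟨{PV.el x' ys c i}, {PV.v j}⟩ : Clause (PV X Y A B)) ∈ Υ) with hseeddef
  have hseedcard : seedIdx.card ≤ Filt.card := by
    have hex : ∀ i ∈ seedIdx, ∃ w : PV X Y A B,
        (⟨{w}, {PV.v j}⟩ : Clause (PV X Y A B)) ∈ Υ ∧ pvIdx w = i := by
      intro i hi
      rcases (Finset.mem_filter.1 hi).2 with ⟨x', h⟩ | ⟨x', c, h⟩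
      · exact ⟨PV.e x' ys i, h, rfl⟩
      · exact ⟨PV.el x' ys c i, h, rfl⟩
    choose wfn hwmem hwidx using hex
    refine Finset.card_le_card_of_injOn
      (fun i => if h : i ∈ seedIdx then (⟨{wfn i h}, {PV.v j}⟩ : Clause (PV X Y A B))
        else ⟨∅, ∅⟩) ?_ ?_
    · intro i hi
      simp only [dif_pos (Finset.mem_coe.1 hi)]
      exact Finset.mem_filter.2 ⟨hwmem i hi, Finset.mem_singleton_self _⟩
    · intro i1 h1 i2 h2 heq
      simp only [Finset.mem_coe] at h1 h2
      simp only [dif_pos h1, dif_pos h2] at heq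
      have hww : wfn i1 h1 = wfn i2 h2 :=
        Finset.singleton_inj.1 (congrArg Clause.pos heq)
      rw [← hwidx i1 h1, ← hwidx i2 h2, hww]
  have hB1 : 1 ≤ Fintype.card B := @Fintype.card_pos B _ ⟨gb ys⟩
  have hY1 : 1 ≤ Fintype.card Y := Fintype.card_pos
  have hsl : seedIdx.card < (Finset.Icc 1 d).card := by
    rw [Nat.card_Icc]
    have hYB : Fintype.card Y ≤ Fintype.card Y * Fintype.card B :=
      Nat.le_mul_of_pos_right _ hB1
    omega
  obtain ⟨i₀, hi₀I, hi₀n⟩ : ∃ i₀ ∈ Finset.Icc 1 d, i₀ ∉ seedIdx := by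
    by_contra hall
    push_neg at hall
    exact absurd (Finset.card_le_card fun i hi => hall i hi) (not_le.2 hsl)
  have hnoseedE : ∀ x', PV.e x' ys i₀ ∉ Qj Υ j := fun x' hmem =>
    hi₀n (Finset.mem_filter.2 ⟨hi₀I, Or.inl ⟨x', hmem⟩⟩)
  have hnoseedEl : ∀ x' c, PV.el x' ys c i₀ ∉ Qj Υ j := fun x' c hmem =>
    hi₀n (Finset.mem_filter.2 ⟨hi₀I, Or.inr ⟨x', c, hmem⟩⟩)
  have hCC : ∀ ℓ₀ : Lab X Y A B, PV.u ℓ₀ ∉ Qj Υ j → CCond I (Qj Υ j) ys := by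
    intro ℓ₀ hn
    exact cc_of_deriv (hnoIsoY ys) hi₀I hnoseedE hnoseedEl hn
      (derivPsi_Qj_active hfeas' hPH hprime hrep hj trivial)
  -- lower bound
  have hge : 1 ≤ (fjY Υ j ys).card := by
    rw [Nat.one_le_iff_ne_zero, Ne, Finset.card_eq_zero]
    intro hempty
    have hn : PV.u (Sum.inr (ys, gb ys)) ∉ Qj Υ j := by
      intro hmem
      have hm : gb ys ∈ fjY Υ j ys := Finset.mem_filter.2 ⟨Finset.mem_univ _, hmem⟩
      rw [hempty] at hm
      exact absurd hm (Finset.notMem_empty _)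
    obtain ⟨c, hc, _⟩ := hCC _ hn
    have hm : c ∈ fjY Υ j ys := Finset.mem_filter.2 ⟨Finset.mem_univ _, hc⟩
    rw [hempty] at hm
    exact absurd hm (Finset.notMem_empty _)
  -- upper bound
  have hle : (fjY Υ j ys).card ≤ 1 := by
    by_contra hgt
    push_neg at hgt
    set uF : Finset (PV X Y A B) :=
      ((Finset.univ : Finset (X × A)).image fun p => PV.u (Sum.inl p)) ∪
      ((Finset.univ : Finset (Y × B)).image fun p => PV.u (Sum.inr p)) with huFdef
    have huF_shape : ∀ q ∈ uF, ∃ ℓ, q = PV.u ℓ := by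
      intro q hq
      rcases Finset.mem_union.1 hq with h | h
      · obtain ⟨p, _, rfl⟩ := Finset.mem_image.1 h
        exact ⟨_, rfl⟩
      · obtain ⟨p, _, rfl⟩ := Finset.mem_image.1 h
        exact ⟨_, rfl⟩
    have huFcard : uF.card =
        Fintype.card X * Fintype.card A + Fintype.card Y * Fintype.card B := by
      rw [huFdef, Finset.card_union_of_disjoint, Finset.card_image_of_injective,
        Finset.card_image_of_injective, Finset.card_univ, Finset.card_univ,
        Fintype.card_prod, Fintype.card_prod]
      · intro p q h
        injection h with h'
        exact Sum.inr.inj h'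
      · intro p q h
        injection h with h'
        exact Sum.inl.inj h'
      · refine Finset.disjoint_left.2 ?_
        rintro w h1 h2
        obtain ⟨p, _, rfl⟩ := Finset.mem_image.1 h1
        obtain ⟨p', _, hEq⟩ := Finset.mem_image.1 h2
        injection hEq with h'
        cases h'
    have hB2 : 2 ≤ Fintype.card B := by
      have h1 : (fjY Υ j ys).card ≤ Fintype.card B := by
        refine le_trans (Finset.card_le_card (Finset.filter_subset _ _)) ?_
        rw [Finset.card_univ]
      omega
    have hw₀ : ∃ ℓ₀ : Lab X Y A B, PV.u ℓ₀ ∉ Qj Υ j := by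
      by_contra hall
      push_neg at hall
      have hsub : uF.card ≤ Filt.card := by
        refine Finset.card_le_card_of_injOn
          (fun q => (⟨{q}, {PV.v j}⟩ : Clause (PV X Y A B))) ?_ ?_
        · intro q hq
          obtain ⟨ℓ, rfl⟩ := huF_shape q hq
          exact Finset.mem_filter.2 ⟨hall ℓ, Finset.mem_singleton_self _⟩
        · intro q1 _ q2 _ h
          exact Finset.singleton_inj.1 (congrArg Clause.pos h)
      have h6 : Fintype.card Y * 2 ≤ Fintype.card Y * Fintype.card B :=
        Nat.mul_le_mul_left _ hB2
      omega
    obtain ⟨ℓ₀, hℓ₀⟩ := hw₀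
    obtain ⟨cs, hcs, hwit⟩ := hCC ℓ₀ hℓ₀
    obtain ⟨b', hb', hbne⟩ := Finset.exists_mem_ne hgt cs
    set C₀ : Clause (PV X Y A B) := ⟨{PV.u (Sum.inr (ys, b'))}, {PV.v j}⟩ with hC₀def
    have hC₀Υ : C₀ ∈ Υ := (Finset.mem_filter.1 hb').2
    have hrep' : Represents (Υ.erase C₀) (hFun I d t) := by
      intro a
      constructor
      · intro ha
        refine (hrep a).1 ?_
        intro C hC
        by_cases hCC₀ : C = C₀
        · subst hCC₀
          by_cases hvj : a (PV.v j) = true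
          · have hUf : evalCNF (UpsF Υ) a := by
              intro C' hC'
              refine ha C' (Finset.mem_erase.2 ⟨?_, (Finset.mem_filter.1 hC').1⟩)
              intro hEq
              have hv := (Finset.mem_filter.1 hC').2 (PV.v j)
                (by rw [hEq]; exact Finset.mem_singleton_self _)
              simp [isV] at hv
            have hpsi := upsF_sat_psi hPH hprime hrep hUf
            have hQ' : ∀ q ∈ Qj Υ j \ {PV.u (Sum.inr (ys, b'))}, a q = true := by
              intro q hq
              obtain ⟨hq1, hq2⟩ := hq
              have hclause : (⟨{q}, {PV.v j}⟩ : Clause (PV X Y A B)) ∈ Υ.erase C₀ := by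
                refine Finset.mem_erase.2 ⟨?_, hq1⟩
                intro hEq
                exact hq2 (Finset.singleton_inj.1 (congrArg Clause.pos hEq))
              rcases ha _ hclause with ⟨z, hz, hzt⟩ | ⟨z, hz, hzf⟩
              · rw [Finset.mem_singleton] at hz
                rwa [← hz]
              · rw [Finset.mem_singleton] at hz
                rw [hz, hvj] at hzf
                cases hzf
            have hbig : ∀ w ∈ bigBody I d, Deriv (PsiCNF I d) (Qj Υ j) w := by
              intro w hw
              obtain ⟨x, y, i, hE, hi, rfl⟩ := mem_bigBody.1 hw
              exact derivPsi_Qj_active hfeas' hPH hprime hrep hj ⟨hE, hi⟩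
            have hdrop := deriv_dropped hcs (fun h => hbne (h.symm ▸ rfl)) hwit hbig
            exact Or.inl ⟨_, Finset.mem_singleton_self _, deriv_true hpsi hQ' hdrop⟩
          · exact Or.inr ⟨PV.v j, Finset.mem_singleton_self _, by simpa using hvj⟩
        · exact ha C (Finset.mem_erase.2 ⟨hCC₀, hC⟩)
      · intro hh C hC
        exact (hrep a).2 hh C (Finset.mem_erase.1 hC).2
    have hmincard := hmin _ (fun C hC => hPH C (Finset.erase_subset _ _ hC)) hrep'
    rw [Finset.card_erase_of_mem hC₀Υ] at hmincard
    have hposcard : 0 < Υ.card := Finset.card_pos.2 ⟨C₀, hC₀Υ⟩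
    omega
  exact ⟨hge, le_antisymm hle hge⟩
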